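/- Let r ≥ 2, let d_{r}(m) = Σ_j j!(r−1)^j C(m,j)^2, and let p_n = |E_n^r((1^(1),2^(1)), (2^(1),1^(2)))|. Then p_n satisfies the recurrence p_n = n(r−1) p_{n−1} + Σ_{i=1}^n C(n−1, i−1) (n−i)! (r−1)^{n−i} d_{r−1}(i−1) for n ≥ 1, with p_0 = 1. -/

import Mathlib

open Finset Equiv

/-- A signed permutation of length `n` with `r` signs: a permutation of `Fin n`
together with a sign in `Fin r` attached to each position. -/
abbrev SignedPerm (n r : ℕ) := Equiv.Perm (Fin n) × (Fin n → Fin r)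

/-- `SPContains p x` : the signed permutation `x` contains the signed pattern `p`,
i.e. there is an increasing sequence of positions on which the symbols of `x` are
order-isomorphic to the symbols of `p` and the signs match exactly. -/
def SPContains {k n r : ℕ} (p : SignedPerm k r) (x : SignedPerm n r) : Prop :=
  ∃ f : Fin k → Fin n, StrictMono f ∧
    (∀ i j : Fin k, p.1 i < p.1 j ↔ x.1 (f i) < x.1 (f j)) ∧
    (∀ i : Fin k, x.2 (f i) = p.2 i)

/-- Classical (unsigned) pattern containment for permutations. -/
def PContains {k m : ℕ} (τ : Equiv.Perm (Fin k)) (σ : Equiv.Perm (Fin m)) : Prop :=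
  ∃ f : Fin k → Fin m, StrictMono f ∧ ∀ i j : Fin k, τ i < τ j ↔ σ (f i) < σ (f j)


section Infra

variable {m r : ℕ}

/-- Insert the maximal value `last m` at position `t`. -/
def insPerm (t : Fin (m+1)) (τ : Equiv.Perm (Fin m)) : Equiv.Perm (Fin (m+1)) :=
  ((finSuccEquiv' t).trans (Equiv.optionCongr τ)).trans (finSuccEquiv' (Fin.last m)).symm

@[simp] lemma insPerm_self (t : Fin (m+1)) (τ : Equiv.Perm (Fin m)) :
    insPerm t τ t = Fin.last m := by
  simp [insPerm, finSuccEquiv'_at, finSuccEquiv'_symm_none]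

@[simp] lemma insPerm_succAbove (t : Fin (m+1)) (τ : Equiv.Perm (Fin m)) (x : Fin m) :
    insPerm t τ (t.succAbove x) = (τ x).castSucc := by
  simp [insPerm, finSuccEquiv'_succAbove, finSuccEquiv'_symm_some, Fin.succAbove_last]

/-- Permutations of `Fin (m+1)` sending `t` to the max value correspond to
permutations of `Fin m`. -/
def permAtEquiv (t : Fin (m+1)) :
    Equiv.Perm (Fin m) ≃ {σ : Equiv.Perm (Fin (m+1)) // σ t = Fin.last m} where
  toFun τ := ⟨insPerm t τ, insPerm_self t τ⟩
  invFun σ := Equiv.removeNone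
    (((finSuccEquiv' t).symm.trans σ.1).trans (finSuccEquiv' (Fin.last m)))
  left_inv τ := by
    have : ((finSuccEquiv' t).symm.trans (insPerm t τ)).trans (finSuccEquiv' (Fin.last m))
        = Equiv.optionCongr τ := by
      ext o
      cases o with
      | none => simp [finSuccEquiv'_symm_none, finSuccEquiv'_at]
      | some x => simp [finSuccEquiv'_symm_some, finSuccEquiv'_succAbove,
          finSuccEquiv'_last_apply_castSucc]
    show Equiv.removeNone (((finSuccEquiv' t).symm.trans (insPerm t τ)).trans
      (finSuccEquiv' (Fin.last m))) = τ
    rw [this, Equiv.removeNone_optionCongr]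
  right_inv := by
    rintro ⟨σ, hσ⟩
    set e := ((finSuccEquiv' t).symm.trans σ).trans (finSuccEquiv' (Fin.last m)) with he
    have hnone : ∀ x, e (some x) ≠ none := by
      intro x hx
      have : σ (t.succAbove x) = Fin.last m := by
        have := congrArg (finSuccEquiv' (Fin.last m)).symm hx
        simpa [he, finSuccEquiv'_symm_some, finSuccEquiv'_symm_none] using this
      exact (Fin.succAbove_ne t x) (σ.injective (this.trans hσ.symm))
    ext y
    rcases eq_or_ne y t with rfl | hy
    · simp [hσ]
    · obtain ⟨x, rfl⟩ := Fin.exists_succAbove_eq hy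
      simp only [insPerm_succAbove]
      rcases hex : e (some x) with _ | z
      · exact absurd hex (hnone x)
      · have h1 : some (Equiv.removeNone e x) = e (some x) :=
          Equiv.removeNone_some e ⟨z, hex⟩
        have h2 : e (some x) = finSuccEquiv' (Fin.last m) (σ (t.succAbove x)) := by
          simp [he, finSuccEquiv'_symm_some]
        rw [h2] at h1
        have h3 : σ (t.succAbove x) ≠ Fin.last m := by
          intro hcon
          exact (Fin.succAbove_ne t x) (σ.injective (hcon.trans hσ.symm))
        have h4 : finSuccEquiv' (Fin.last m) (σ (t.succAbove x))
            = some ((σ (t.succAbove x)).castPred h3) := by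
          rw [finSuccEquiv'_last_apply h3]
          rfl
        rw [h4] at h1
        rw [Option.some_injective _ h1, Fin.castSucc_castPred]

/-- The avoidance condition, unbundled. -/
def AvoidCond {n : ℕ} (x : SignedPerm n r) : Prop :=
  (∀ z j : Fin n, z < j → (x.2 z : ℕ) = 0 → (x.2 j : ℕ) = 0 → x.1 j < x.1 z) ∧
  (∀ z j : Fin n, z < j → (x.2 z : ℕ) = 0 → (x.2 j : ℕ) = 1 → x.1 z < x.1 j)

lemma avoid_iff (hr : 2 ≤ r) {n : ℕ} (x : SignedPerm n r) :
    (¬ SPContains ((1 : Equiv.Perm (Fin 2)),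
        ![(⟨0, Nat.lt_of_lt_of_le (by decide) hr⟩ : Fin r), ⟨0, Nat.lt_of_lt_of_le (by decide) hr⟩]) x ∧
     ¬ SPContains (Equiv.swap 0 1,
        ![(⟨0, Nat.lt_of_lt_of_le (by decide) hr⟩ : Fin r), ⟨1, hr⟩]) x) ↔ AvoidCond x := by
  have hmono : ∀ z j : Fin n, z < j → StrictMono ![z, j] := by
    intro z j hzj a b hab
    fin_cases a <;> fin_cases b <;> simp_all <;> omega
  constructor
  · rintro ⟨hA, hB⟩
    constructor
    · intro z j hzj hz hj
      rcases lt_trichotomy (x.1 j) (x.1 z) with h | h | h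
      · exact h
      · exact absurd (x.1.injective h.symm) (ne_of_lt hzj)
      · exact absurd ⟨![z, j], hmono z j hzj, by
          intro i j'
          fin_cases i <;> fin_cases j' <;>
            simp [Equiv.Perm.coe_one, h, h.asymm, lt_irrefl], by
          intro i
          fin_cases i <;> simp [Fin.ext_iff, hz, hj]⟩ hA
    · intro z j hzj hz hj
      rcases lt_trichotomy (x.1 z) (x.1 j) with h | h | h
      · exact h
      · exact absurd (x.1.injective h) (ne_of_lt hzj)
      · exact absurd ⟨![z, j], hmono z j hzj, by
          intro i j'
          fin_cases i <;> fin_cases j' <;>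
            simp [Equiv.swap_apply_left, Equiv.swap_apply_right, h, h.asymm, lt_irrefl], by
          intro i
          fin_cases i <;> simp [Fin.ext_iff, hz, hj]⟩ hB
  · rintro ⟨h1, h2⟩
    constructor
    · rintro ⟨f, hf, hord, hsign⟩
      have hzj : f 0 < f 1 := hf (by decide)
      have hv : x.1 (f 0) < x.1 (f 1) := (hord 0 1).1
        (by show (1 : Equiv.Perm (Fin 2)) 0 < (1 : Equiv.Perm (Fin 2)) 1; decide)
      have hz := hsign 0
      have hj := hsign 1
      simp only [Matrix.cons_val_zero, Matrix.cons_val_one, Matrix.head_cons] at hz hj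
      exact absurd hv (h1 (f 0) (f 1) hzj (by rw [hz]) (by rw [hj])).asymm
    · rintro ⟨f, hf, hord, hsign⟩
      have hzj : f 0 < f 1 := hf (by decide)
      have hv : x.1 (f 1) < x.1 (f 0) := (hord 1 0).1
        (by show Equiv.swap (0 : Fin 2) 1 1 < Equiv.swap (0 : Fin 2) 1 0; decide)
      have hz := hsign 0
      have hj := hsign 1
      simp only [Matrix.cons_val_zero, Matrix.cons_val_one, Matrix.head_cons] at hz hj
      exact absurd hv (h2 (f 0) (f 1) hzj (by rw [hz]) (by rw [hj])).asymm

/-- Insertion of a maximal entry with sign `s` at position `t`. -/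
def insSP (t : Fin (m+1)) (s : Fin r) (y : SignedPerm m r) : SignedPerm (m+1) r :=
  (insPerm t y.1, t.insertNth s y.2)

def insSPEquiv (t : Fin (m+1)) :
    (Fin r × SignedPerm m r) ≃ {x : SignedPerm (m+1) r // x.1 t = Fin.last m} where
  toFun sy := ⟨insSP t sy.1 sy.2, insPerm_self t _⟩
  invFun x := (x.1.2 t, ((permAtEquiv t).symm ⟨x.1.1, x.2⟩, fun i => x.1.2 (t.succAbove i)))
  left_inv := by
    rintro ⟨s, τ, d⟩
    have h1 : ((permAtEquiv t).symm ⟨insPerm t τ, insPerm_self t τ⟩) = τ :=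
      (permAtEquiv t).left_inv τ
    simp only [insSP, Fin.insertNth_apply_same, Fin.insertNth_apply_succAbove]
    exact congrArg₂ Prod.mk rfl (congrArg₂ Prod.mk h1 rfl)
  right_inv := by
    rintro ⟨⟨σ, c⟩, h⟩
    have h1 : insPerm t ((permAtEquiv t).symm ⟨σ, h⟩) = σ :=
      congrArg Subtype.val ((permAtEquiv t).right_inv ⟨σ, h⟩)
    apply Subtype.ext
    apply Prod.ext
    · exact h1
    · funext j
      rcases eq_or_ne j t with rfl | hj
      · simp [insSP, Fin.insertNth_apply_same]
      · obtain ⟨i, rfl⟩ := Fin.exists_succAbove_eq hj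
        simp [insSP, Fin.insertNth_apply_succAbove]

@[simp] lemma insSP_snd_self (t : Fin (m+1)) (s : Fin r) (y : SignedPerm m r) :
    (insSP t s y).2 t = s := by simp [insSP]

@[simp] lemma insSP_snd_succAbove (t : Fin (m+1)) (s : Fin r) (y : SignedPerm m r)
    (x : Fin m) : (insSP t s y).2 (t.succAbove x) = y.2 x := by simp [insSP]

@[simp] lemma insSP_fst_self (t : Fin (m+1)) (s : Fin r) (y : SignedPerm m r) :
    (insSP t s y).1 t = Fin.last m := insPerm_self t y.1

@[simp] lemma insSP_fst_succAbove (t : Fin (m+1)) (s : Fin r) (y : SignedPerm m r)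
    (x : Fin m) : (insSP t s y).1 (t.succAbove x) = (y.1 x).castSucc :=
  insPerm_succAbove t y.1 x

/-- Transfer of avoidance through insertion of max with nonzero sign. -/
lemma avoidCond_insSP_iff (t : Fin (m+1)) (s : Fin r) (hs : (s : ℕ) ≠ 0)
    (y : SignedPerm m r) : AvoidCond (insSP t s y) ↔ AvoidCond y := by
  constructor
  · rintro ⟨H1, H2⟩
    constructor
    · intro x x' h h0 h0'
      have := H1 (t.succAbove x) (t.succAbove x') (Fin.succAbove_lt_succAbove_iff.2 h)
        (by simpa using h0) (by simpa using h0')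
      simpa [Fin.castSucc_lt_castSucc_iff] using this
    · intro x x' h h0 h1
      have := H2 (t.succAbove x) (t.succAbove x') (Fin.succAbove_lt_succAbove_iff.2 h)
        (by simpa using h0) (by simpa using h1)
      simpa [Fin.castSucc_lt_castSucc_iff] using this
  · rintro ⟨h1, h2⟩
    constructor
    · intro z j hzj hz0 hj0
      rcases eq_or_ne z t with rfl | hz
      · exact absurd (by simpa using hz0) hs
      obtain ⟨x, rfl⟩ := Fin.exists_succAbove_eq hz
      rcases eq_or_ne j t with rfl | hj
      · exact absurd (by simpa using hj0) hs
      obtain ⟨x', rfl⟩ := Fin.exists_succAbove_eq hj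
      have := h1 x x' (Fin.succAbove_lt_succAbove_iff.1 hzj)
        (by simpa using hz0) (by simpa using hj0)
      simpa [Fin.castSucc_lt_castSucc_iff] using this
    · intro z j hzj hz0 hj1
      rcases eq_or_ne z t with rfl | hz
      · exact absurd (by simpa using hz0) hs
      obtain ⟨x, rfl⟩ := Fin.exists_succAbove_eq hz
      rcases eq_or_ne j t with rfl | hj
      · simpa using Fin.castSucc_lt_last (y.1 x)
      obtain ⟨x', rfl⟩ := Fin.exists_succAbove_eq hj
      have := h2 x x' (Fin.succAbove_lt_succAbove_iff.1 hzj)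
        (by simpa using hz0) (by simpa using hj1)
      simpa [Fin.castSucc_lt_castSucc_iff] using this

/-- Characterization of avoidance when the max has sign `0`. -/
lemma avoidCond_insSP_zero_iff (t : Fin (m+1)) (s : Fin r) (hs : (s : ℕ) = 0)
    (y : SignedPerm m r) : AvoidCond (insSP t s y) ↔
      ((∀ x : Fin m, x.castSucc < t → (y.2 x : ℕ) ≠ 0) ∧
       (∀ x : Fin m, t ≤ x.castSucc → (y.2 x : ℕ) ≠ 1) ∧
       (∀ x x' : Fin m, x < x' → t ≤ x.castSucc → (y.2 x : ℕ) = 0 →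
          (y.2 x' : ℕ) = 0 → y.1 x' < y.1 x)) := by
  constructor
  · rintro ⟨H1, H2⟩
    refine ⟨fun x hx h0 => ?_, fun x hx h1 => ?_, fun x x' hlt hx h0 h0' => ?_⟩
    · have := H1 (t.succAbove x) t ((Fin.succAbove_lt_iff_castSucc_lt _ _).2 hx)
        (by simpa using h0) (by simpa using hs)
      simp only [insSP_fst_self, insSP_fst_succAbove] at this
      exact absurd this (Fin.castSucc_lt_last (y.1 x)).asymm
    · have := H2 t (t.succAbove x) ((Fin.lt_succAbove_iff_le_castSucc t x).2 hx)
        (by simpa using hs) (by simpa using h1)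
      simp only [insSP_fst_self, insSP_fst_succAbove] at this
      exact absurd this (Fin.castSucc_lt_last (y.1 x)).asymm
    · have := H1 (t.succAbove x) (t.succAbove x') (Fin.succAbove_lt_succAbove_iff.2 hlt)
        (by simpa using h0) (by simpa using h0')
      simpa [Fin.castSucc_lt_castSucc_iff] using this
  · rintro ⟨D1, D2, hanti⟩
    constructor
    · intro z j hzj hz0 hj0
      rcases eq_or_ne j t with rfl | hj
      · -- `z` is a sign-0 position before `t`; contradicts D1
        rcases eq_or_ne z j with rfl | hz
        · exact absurd rfl (ne_of_lt hzj)
        obtain ⟨x, rfl⟩ := Fin.exists_succAbove_eq hz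
        exact absurd (by simpa using hz0)
          (D1 x ((Fin.succAbove_lt_iff_castSucc_lt _ _).1 hzj))
      obtain ⟨x', rfl⟩ := Fin.exists_succAbove_eq hj
      rcases eq_or_ne z t with rfl | hz
      · simpa using Fin.castSucc_lt_last (y.1 x')
      obtain ⟨x, rfl⟩ := Fin.exists_succAbove_eq hz
      have hxlt : x < x' := Fin.succAbove_lt_succAbove_iff.1 hzj
      have htx : t ≤ x.castSucc := by
        by_contra hcon
        exact D1 x (lt_of_not_ge hcon) (by simpa using hz0)
      have := hanti x x' hxlt htx (by simpa using hz0) (by simpa using hj0)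
      simpa [Fin.castSucc_lt_castSucc_iff] using this
    · intro z j hzj hz0 hj1
      rcases eq_or_ne j t with rfl | hj
      · have : (s : ℕ) = 1 := by simpa using hj1
        omega
      obtain ⟨x', rfl⟩ := Fin.exists_succAbove_eq hj
      have hj1' : (y.2 x' : ℕ) = 1 := by simpa using hj1
      rcases eq_or_ne z t with rfl | hz
      · exact absurd hj1'
          (D2 x' ((Fin.lt_succAbove_iff_le_castSucc _ x').1 hzj))
      obtain ⟨x, rfl⟩ := Fin.exists_succAbove_eq hz
      have hxlt : x < x' := Fin.succAbove_lt_succAbove_iff.1 hzj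
      have htx : t ≤ x.castSucc := by
        by_contra hcon
        exact D1 x (lt_of_not_ge hcon) (by simpa using hz0)
      exact absurd hj1' (D2 x' (le_trans htx (by simpa [Fin.castSucc_le_castSucc_iff] using hxlt.le)))

/-- The set of values not hit by an embedding defined on the complement of `S`. -/
def Udef (S : Finset (Fin m)) (g : {a // a ∈ Sᶜ} ↪ Fin m) : Finset (Fin m) :=
  (Sᶜ.attach.image (fun a => g a))ᶜ

lemma mem_Udef {S : Finset (Fin m)} {g : {a // a ∈ Sᶜ} ↪ Fin m} {v : Fin m} :
    v ∈ Udef S g ↔ ∀ a : {a // a ∈ Sᶜ}, g a ≠ v := by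
  simp [Udef]

lemma card_Udef (S : Finset (Fin m)) (g : {a // a ∈ Sᶜ} ↪ Fin m) :
    (Udef S g).card = S.card := by
  have h1 : (Sᶜ.attach.image (fun a => g a)).card = Sᶜ.card := by
    rw [Finset.card_image_of_injective _ g.injective, Finset.card_attach]
  have h2 : S.card ≤ m := by simpa using S.card_le_univ
  have h3 : Sᶜ.card = m - S.card := by
    rw [Finset.card_compl]; simp
  rw [Udef, Finset.card_compl, h1, h3]
  simp
  omega

/-- Extension of an embedding on the complement of `S` to a map decreasing on `S`. -/
def extFun (S : Finset (Fin m)) (g : {a // a ∈ Sᶜ} ↪ Fin m) : Fin m → Fin m :=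
  fun a => if h : a ∈ S then
      (Udef S g).orderEmbOfFin (card_Udef S g) (((S.orderIsoOfFin rfl).symm ⟨a, h⟩).rev)
    else g ⟨a, Finset.mem_compl.2 h⟩

lemma extFun_injective (S : Finset (Fin m)) (g : {a // a ∈ Sᶜ} ↪ Fin m) :
    Function.Injective (extFun S g) := by
  intro a b hab
  unfold extFun at hab
  by_cases ha : a ∈ S <;> by_cases hb : b ∈ S <;> simp only [ha, hb, dif_pos, dif_neg,
    not_false_iff] at hab
  · have h1 := ((Udef S g).orderEmbOfFin (card_Udef S g)).injective hab
    have h2 := Fin.rev_injective h1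
    have h3 := (S.orderIsoOfFin rfl).symm.injective h2
    exact congrArg Subtype.val h3
  · exfalso
    have hmem : (Udef S g).orderEmbOfFin (card_Udef S g)
        (((S.orderIsoOfFin rfl).symm ⟨a, ha⟩).rev) ∈ Udef S g :=
      Finset.orderEmbOfFin_mem _ _ _
    rw [hab] at hmem
    exact (mem_Udef.1 hmem) ⟨b, Finset.mem_compl.2 hb⟩ rfl
  · exfalso
    have hmem : (Udef S g).orderEmbOfFin (card_Udef S g)
        (((S.orderIsoOfFin rfl).symm ⟨b, hb⟩).rev) ∈ Udef S g :=
      Finset.orderEmbOfFin_mem _ _ _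
    rw [← hab] at hmem
    exact (mem_Udef.1 hmem) ⟨a, Finset.mem_compl.2 ha⟩ rfl
  · exact congrArg Subtype.val (g.injective hab)

/-- The extension as a permutation. -/
noncomputable def extPerm (S : Finset (Fin m)) (g : {a // a ∈ Sᶜ} ↪ Fin m) : Equiv.Perm (Fin m) :=
  Equiv.ofBijective (extFun S g) (Finite.injective_iff_bijective.1 (extFun_injective S g))

lemma extPerm_apply (S : Finset (Fin m)) (g : {a // a ∈ Sᶜ} ↪ Fin m) (a : Fin m) :
    extPerm S g a = extFun S g a := rfl

lemma extPerm_anti (S : Finset (Fin m)) (g : {a // a ∈ Sᶜ} ↪ Fin m) :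
    ∀ a ∈ S, ∀ b ∈ S, a < b → extPerm S g b < extPerm S g a := by
  intro a ha b hb hab
  rw [extPerm_apply, extPerm_apply]
  unfold extFun
  rw [dif_pos ha, dif_pos hb]
  apply ((Udef S g).orderEmbOfFin (card_Udef S g)).strictMono
  rw [Fin.rev_lt_rev]
  exact (S.orderIsoOfFin rfl).symm.lt_iff_lt.2 (Subtype.mk_lt_mk.2 hab)

/-- Counting lemma: permutations of `Fin m` strictly decreasing on a given set. -/
lemma card_perm_antiOn (S : Finset (Fin m)) :
    Nat.card {τ : Equiv.Perm (Fin m) //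
      ∀ a ∈ S, ∀ b ∈ S, a < b → τ b < τ a} = m.descFactorial (m - S.card) := by
  classical
  have e : {τ : Equiv.Perm (Fin m) // ∀ a ∈ S, ∀ b ∈ S, a < b → τ b < τ a}
      ≃ ({a // a ∈ Sᶜ} ↪ Fin m) := by
    refine
      { toFun := fun τ => ⟨fun a => τ.1 a.1, fun a b hab => Subtype.ext (τ.1.injective hab)⟩
        invFun := fun g => ⟨extPerm S g, extPerm_anti S g⟩
        left_inv := ?_
        right_inv := ?_ }
    · rintro ⟨τ, hτ⟩
      apply Subtype.ext
      apply Equiv.ext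
      intro a
      set g : {a // a ∈ Sᶜ} ↪ Fin m :=
        ⟨fun a => τ a.1, fun a b hab => Subtype.ext (τ.injective hab)⟩ with hg
      show extFun S g a = τ a
      by_cases h : a ∈ S
      · have hψmono : StrictMono (fun j : Fin S.card =>
            τ ((S.orderIsoOfFin rfl) j.rev : Fin m)) := by
          intro j j' hjj'
          have h1 : j'.rev < j.rev := Fin.rev_lt_rev.2 hjj'
          have h2 : (S.orderIsoOfFin rfl) j'.rev < (S.orderIsoOfFin rfl) j.rev :=
            (S.orderIsoOfFin rfl).lt_iff_lt.2 h1
          exact hτ _ ((S.orderIsoOfFin rfl) j'.rev).2 _ ((S.orderIsoOfFin rfl) j.rev).2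
            (Subtype.mk_lt_mk.1 h2)
        have hψmem : ∀ j : Fin S.card,
            τ ((S.orderIsoOfFin rfl) j.rev : Fin m) ∈ Udef S g := by
          intro j
          rw [mem_Udef]
          rintro ⟨b, hb⟩ hgb
          have : b = ((S.orderIsoOfFin rfl) j.rev : Fin m) := τ.injective hgb
          rw [this] at hb
          exact (Finset.mem_compl.1 hb) ((S.orderIsoOfFin rfl) j.rev).2
        have hψ : (fun j : Fin S.card => τ ((S.orderIsoOfFin rfl) j.rev : Fin m))
            = ⇑((Udef S g).orderEmbOfFin (card_Udef S g)) :=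
          Finset.orderEmbOfFin_unique (card_Udef S g) hψmem hψmono
        have h2 : extFun S g a = (Udef S g).orderEmbOfFin (card_Udef S g)
            (((S.orderIsoOfFin rfl).symm ⟨a, h⟩).rev) := by
          unfold extFun
          rw [dif_pos h]
        rw [h2, ← congrFun hψ (((S.orderIsoOfFin rfl).symm ⟨a, h⟩).rev)]
        simp only [Fin.rev_rev]
        rw [OrderIso.apply_symm_apply]
      · show dite _ _ _ = _
        rw [dif_neg h]
        rfl
    · intro g
      apply DFunLike.ext
      rintro ⟨a, ha⟩
      show extFun S g a = g ⟨a, ha⟩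
      unfold extFun
      rw [dif_neg (Finset.mem_compl.1 ha)]
  rw [Nat.card_congr e, Nat.card_eq_fintype_card, Fintype.card_embedding_eq]
  congr 1
  · simp
  · rw [Fintype.card_coe, Finset.card_compl]
    simp

lemma nat_card_split {α : Type*} [Fintype α] (R P : α → Prop) :
    Nat.card {x // R x} = Nat.card {x // R x ∧ P x} + Nat.card {x // R x ∧ ¬ P x} := by
  classical
  rw [Nat.card_eq_fintype_card, Nat.card_eq_fintype_card, Nat.card_eq_fintype_card,
    Fintype.card_subtype, Fintype.card_subtype, Fintype.card_subtype,
    ← Finset.filter_filter, ← Finset.filter_filter,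
    Finset.card_filter_add_card_filter_not]

/-- Generic equivalence between a subtype of a product and a sigma type. -/
def prodSubtypeSigmaEquiv {α β : Type*} (P : β → Prop) (Q : α → β → Prop) :
    {y : α × β // P y.2 ∧ Q y.1 y.2} ≃ Σ b : {b // P b}, {a // Q a b.1} where
  toFun y := ⟨⟨y.1.2, y.2.1⟩, ⟨y.1.1, y.2.2⟩⟩
  invFun z := ⟨(z.2.1, z.1.1), ⟨z.1.2, z.2.2⟩⟩
  left_inv y := rfl
  right_inv z := rfl

lemma card_slice (t : Fin (m+1)) (Q : SignedPerm (m+1) r → Prop) :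
    Nat.card {x : SignedPerm (m+1) r // x.1 t = Fin.last m ∧ Q x}
      = Nat.card {sy : Fin r × SignedPerm m r // Q (insSP t sy.1 sy.2)} :=
  (Nat.card_congr ((((insSPEquiv t).subtypeEquiv (fun sy => Iff.rfl)).trans
    (Equiv.subtypeSubtypeEquivSubtypeInter _ _)))).symm

lemma card_signs_eq_zero (hr : 0 < r) : Nat.card {s : Fin r // (s : ℕ) = 0} = 1 := by
  rw [Nat.card_congr (Equiv.subtypeEquivRight (q := fun v : Fin r => v = ⟨0, hr⟩)
    (fun v => by simp [Fin.ext_iff]))]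
  rw [Nat.card_eq_fintype_card]
  exact Fintype.card_subtype_eq _

lemma card_signs_ne_zero (hr : 0 < r) : Nat.card {s : Fin r // (s : ℕ) ≠ 0} = r - 1 := by
  rw [Nat.card_eq_fintype_card, Fintype.card_subtype_compl, Fintype.card_fin]
  have := card_signs_eq_zero (r := r) hr
  rw [Nat.card_eq_fintype_card] at this
  rw [this]

lemma card_signs_ne_one_ne_zero (hr : 2 ≤ r) :
    Fintype.card {v : Fin r // (v : ℕ) ≠ 1 ∧ (v : ℕ) ≠ 0} = r - 2 := by
  classical
  rw [Fintype.card_subtype]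
  have h : Finset.univ.filter (fun v : Fin r => (v : ℕ) ≠ 1 ∧ (v : ℕ) ≠ 0)
      = Finset.univ \ ({⟨1, by omega⟩, ⟨0, by omega⟩} : Finset (Fin r)) := by
    ext v
    simp [Fin.ext_iff, and_comm]
  rw [h, Finset.card_sdiff_of_subset (by intro v _; exact Finset.mem_univ v)]
  rw [Finset.card_univ, Fintype.card_fin]
  have : ({(⟨1, by omega⟩ : Fin r), ⟨0, by omega⟩} : Finset (Fin r)).card = 2 := by
    rw [Finset.card_insert_of_notMem (by simp [Fin.ext_iff]), Finset.card_singleton]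
  rw [this]

lemma card_lows (t : Fin (m+1)) :
    (Finset.univ.filter (fun x : Fin m => x.castSucc < t)).card = (t : ℕ) := by
  rw [← Finset.card_range (t : ℕ)]
  refine Finset.card_bij (fun x _ => (x : ℕ)) ?_ ?_ ?_
  · intro x hx
    simp only [Finset.mem_filter, Finset.mem_univ, true_and] at hx
    simp only [Finset.mem_range]
    simpa [Fin.lt_def] using hx
  · intro a _ b _ h
    exact Fin.ext h
  · intro j hj
    simp only [Finset.mem_range] at hj
    have hjm : j < m := by
      have := t.is_le
      omega
    refine ⟨⟨j, hjm⟩, ?_, rfl⟩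
    simp only [Finset.mem_filter, Finset.mem_univ, true_and]
    simpa [Fin.lt_def] using hj

lemma card_highs (t : Fin (m+1)) :
    (Finset.univ.filter (fun x : Fin m => t ≤ x.castSucc)).card = m - (t : ℕ) := by
  have h1 := Finset.card_filter_add_card_filter_not
    (s := (Finset.univ : Finset (Fin m))) (fun x : Fin m => x.castSucc < t)
  have h2 : Finset.univ.filter (fun x : Fin m => ¬ x.castSucc < t)
      = Finset.univ.filter (fun x : Fin m => t ≤ x.castSucc) := by
    apply Finset.filter_congr
    intro x _
    simp [not_lt]
  rw [h2, card_lows] at h1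
  have h3 : (Finset.univ : Finset (Fin m)).card = m := by simp
  omega

lemma card_case1 (hr : 0 < r) (t : Fin (m+1)) :
    Nat.card {x : SignedPerm (m+1) r // x.1 t = Fin.last m ∧
        (AvoidCond x ∧ ((x.2 t : ℕ) ≠ 0))}
      = (r - 1) * Nat.card {y : SignedPerm m r // AvoidCond y} := by
  rw [card_slice]
  have h : ∀ sy : Fin r × SignedPerm m r,
      (AvoidCond (insSP t sy.1 sy.2) ∧ ((insSP t sy.1 sy.2).2 t : ℕ) ≠ 0)
        ↔ (((sy.1 : ℕ) ≠ 0) ∧ AvoidCond sy.2) := by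
    intro sy
    rw [insSP_snd_self]
    constructor
    · rintro ⟨hA, hs⟩
      exact ⟨hs, (avoidCond_insSP_iff t sy.1 hs sy.2).1 hA⟩
    · rintro ⟨hs, hA⟩
      exact ⟨(avoidCond_insSP_iff t sy.1 hs sy.2).2 hA, hs⟩
  rw [Nat.card_congr ((Equiv.subtypeEquivRight h).trans
    (Equiv.subtypeProdEquivProd (p := fun s : Fin r => (s : ℕ) ≠ 0) (q := AvoidCond)))]
  rw [Nat.card_prod, card_signs_ne_zero hr]

lemma desc_term (a b j : ℕ) (hj : j ≤ b) :
    (a+b).descFactorial (a+j) = (a+b).choose b * (a.factorial * (j.factorial * b.choose j)) := by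
  apply Nat.eq_of_mul_eq_mul_right (Nat.factorial_pos (b - j))
  have h4 : (a+b).descFactorial (a+j) * (b-j).factorial = (a+b).factorial := by
    rw [mul_comm]
    have h5 := Nat.factorial_mul_descFactorial (show a+j ≤ a+b by omega)
    rwa [show a+b-(a+j) = b-j by omega] at h5
  have h2 : b.choose j * j.factorial * (b-j).factorial = b.factorial :=
    Nat.choose_mul_factorial_mul_factorial hj
  have h3 : (a+b).choose b * b.factorial * a.factorial = (a+b).factorial := by
    have h6 := Nat.choose_mul_factorial_mul_factorial (Nat.le_add_left b a)
    rwa [show a+b-b = a by omega] at h6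
  rw [h4]
  symm
  calc (a+b).choose b * (a.factorial * (j.factorial * b.choose j)) * (b-j).factorial
      = (a+b).choose b * (b.choose j * j.factorial * (b-j).factorial) * a.factorial := by ring
    _ = (a+b).factorial := by rw [h2, h3]

lemma sum_case2_eq (r a b : ℕ) :
    ∑ s ∈ Finset.range (b+1), b.choose s * ((r-2)^(b-s) * (a+b).descFactorial ((a+b) - s))
      = (a+b).choose b * (a.factorial * ∑ j ∈ Finset.range (b+1),
          (j.factorial * (r-2)^j * ((b.choose j)^2))) := by
  rw [← Finset.sum_range_reflect]
  rw [Finset.mul_sum, Finset.mul_sum]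
  apply Finset.sum_congr rfl
  intro j hj
  have hjb : j ≤ b := by
    simp only [Finset.mem_range] at hj
    omega
  rw [show b + 1 - 1 - j = b - j by omega, show b - (b - j) = j by omega,
    show a + b - (b - j) = a + j by omega, Nat.choose_symm hjb, desc_term a b j hjb]
  ring

lemma final_sum (r m : ℕ) :
    ∑ a ∈ Finset.range (m+1), ((r-1)^a * ∑ s ∈ Finset.range ((m-a)+1),
        (m-a).choose s * ((r-2)^((m-a)-s) * m.descFactorial (m - s)))
      = ∑ i ∈ Finset.Icc 1 (m+1), (m.choose (i-1) * (m+1-i).factorial * (r-1)^(m+1-i) *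
          ∑ j ∈ Finset.range ((i-1)+1), (j.factorial * (r-2)^j * ((i-1).choose j)^2)) := by
  refine Finset.sum_nbij' (fun a => m+1-a) (fun i => m+1-i) ?_ ?_ ?_ ?_ ?_
  · intro a ha
    simp only [Finset.mem_range] at ha
    simp only [Finset.mem_Icc]
    omega
  · intro i hi
    simp only [Finset.mem_Icc] at hi
    simp only [Finset.mem_range]
    omega
  · intro a ha
    simp only [Finset.mem_range] at ha
    show m+1-(m+1-a) = a
    omega
  · intro i hi
    simp only [Finset.mem_Icc] at hi
    show m+1-(m+1-i) = i
    omega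
  · intro a ha
    simp only [Finset.mem_range] at ha
    rw [show m+1-a-1 = m-a by omega, show m+1-(m+1-a) = a by omega]
    have hb : m = a + (m - a) := by omega
    rw [hb, show a + (m-a) - a = m - a by omega]
    rw [sum_case2_eq r a (m-a)]
    ring

/-- Positions weakly after `t` (in the small index set). -/
def highsF (t : Fin (m+1)) : Finset (Fin m) :=
  Finset.univ.filter (fun x => t ≤ x.castSucc)

/-- The sign-0 positions weakly after `t`. -/
def ZsetD (t : Fin (m+1)) (d : Fin m → Fin r) : Finset (Fin m) :=
  Finset.univ.filter (fun x => t ≤ x.castSucc ∧ (d x : ℕ) = 0)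

/-- Admissibility of the sign vector: no sign-0 before `t`, no sign-1 after. -/
abbrev P2 (t : Fin (m+1)) (d : Fin m → Fin r) : Prop :=
  (∀ x : Fin m, x.castSucc < t → (d x : ℕ) ≠ 0) ∧
  (∀ x : Fin m, t ≤ x.castSucc → (d x : ℕ) ≠ 1)

lemma card_colorings (hr : 2 ≤ r) (t : Fin (m+1)) (T : Finset (Fin m)) :
    ((Finset.univ.filter (fun d : Fin m → Fin r => P2 t d)).filter
        (fun d => ZsetD t d = T)).card
      = if T ⊆ highsF t then (r-1)^(t:ℕ) * (r-2)^((m - (t:ℕ)) - T.card) else 0 := by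
  by_cases hT : T ⊆ highsF t
  · rw [if_pos hT, Finset.filter_filter, ← Fintype.card_subtype]
    have hpoint : ∀ d : Fin m → Fin r, (P2 t d ∧ ZsetD t d = T) ↔
        (∀ x : Fin m, (if t ≤ x.castSucc
          then ((d x : ℕ) ≠ 1 ∧ ((d x : ℕ) = 0 ↔ x ∈ T))
          else (d x : ℕ) ≠ 0)) := by
      intro d
      constructor
      · rintro ⟨⟨D1, D2⟩, hZ⟩
        intro x
        by_cases h : t ≤ x.castSucc
        · rw [if_pos h]
          refine ⟨D2 x h, ?_⟩
          rw [← hZ]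
          simp [ZsetD, h]
        · rw [if_neg h]
          exact D1 x (lt_of_not_ge h)
      · intro hp
        refine ⟨⟨fun x hx => ?_, fun x hx => ?_⟩, ?_⟩
        · have := hp x
          rwa [if_neg (not_le.2 hx)] at this
        · have := hp x
          rw [if_pos hx] at this
          exact this.1
        · ext x
          simp only [ZsetD, Finset.mem_filter, Finset.mem_univ, true_and]
          constructor
          · rintro ⟨h1, h2⟩
            have := hp x
            rw [if_pos h1] at this
            exact this.2.1 h2
          · intro hxT
            have h1 : t ≤ x.castSucc := by
              have := hT hxT
              simpa [highsF] using this
            have := hp x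
            rw [if_pos h1] at this
            exact ⟨h1, this.2.2 hxT⟩
    rw [Fintype.card_congr ((Equiv.subtypeEquivRight hpoint).trans
      (Equiv.subtypePiEquivPi (p := fun (x : Fin m) (v : Fin r) => if t ≤ x.castSucc
          then ((v : ℕ) ≠ 1 ∧ ((v : ℕ) = 0 ↔ x ∈ T))
          else (v : ℕ) ≠ 0)))]
    rw [Fintype.card_pi]
    have hfac : ∀ x : Fin m, Fintype.card {v : Fin r // if t ≤ x.castSucc
          then ((v : ℕ) ≠ 1 ∧ ((v : ℕ) = 0 ↔ x ∈ T))
          else (v : ℕ) ≠ 0}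
        = if t ≤ x.castSucc then (if x ∈ T then 1 else r - 2) else r - 1 := by
      intro x
      by_cases h : t ≤ x.castSucc
      · rw [if_pos h]
        by_cases hx : x ∈ T
        · rw [if_pos hx]
          have e : {v : Fin r // if t ≤ x.castSucc
              then ((v : ℕ) ≠ 1 ∧ ((v : ℕ) = 0 ↔ x ∈ T)) else (v : ℕ) ≠ 0}
              ≃ {v : Fin r // (v : ℕ) = 0} := by
            apply Equiv.subtypeEquivRight
            intro v
            rw [if_pos h]
            constructor
            · rintro ⟨_, h2⟩
              exact h2.2 hx
            · intro hv
              exact ⟨by omega, iff_of_true hv hx⟩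
          rw [Fintype.card_congr e, ← Nat.card_eq_fintype_card,
            card_signs_eq_zero (by omega)]
        · rw [if_neg hx]
          have e : {v : Fin r // if t ≤ x.castSucc
              then ((v : ℕ) ≠ 1 ∧ ((v : ℕ) = 0 ↔ x ∈ T)) else (v : ℕ) ≠ 0}
              ≃ {v : Fin r // (v : ℕ) ≠ 1 ∧ (v : ℕ) ≠ 0} := by
            apply Equiv.subtypeEquivRight
            intro v
            rw [if_pos h]
            constructor
            · rintro ⟨h1, h2⟩
              exact ⟨h1, fun hv => hx (h2.1 hv)⟩
            · rintro ⟨h1, h2⟩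
              exact ⟨h1, iff_of_false h2 hx⟩
          rw [Fintype.card_congr e, card_signs_ne_one_ne_zero hr]
      · rw [if_neg h]
        have e : {v : Fin r // if t ≤ x.castSucc
            then ((v : ℕ) ≠ 1 ∧ ((v : ℕ) = 0 ↔ x ∈ T)) else (v : ℕ) ≠ 0}
            ≃ {v : Fin r // (v : ℕ) ≠ 0} := by
          apply Equiv.subtypeEquivRight
          intro v
          rw [if_neg h]
        rw [Fintype.card_congr e, ← Nat.card_eq_fintype_card,
          card_signs_ne_zero (by omega)]
    rw [Finset.prod_congr rfl (fun x _ => hfac x)]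
    rw [← Finset.prod_filter_mul_prod_filter_not Finset.univ (fun x : Fin m => t ≤ x.castSucc)]
    have hlow : ∀ x ∈ Finset.univ.filter (fun x : Fin m => ¬ t ≤ x.castSucc),
        (if t ≤ x.castSucc then (if x ∈ T then 1 else r - 2) else r - 1) = r - 1 := by
      intro x hx
      simp only [Finset.mem_filter] at hx
      rw [if_neg hx.2]
    have hhigh : ∀ x ∈ Finset.univ.filter (fun x : Fin m => t ≤ x.castSucc),
        (if t ≤ x.castSucc then (if x ∈ T then 1 else r - 2) else r - 1)
          = (if x ∈ T then 1 else r - 2) := by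
      intro x hx
      simp only [Finset.mem_filter] at hx
      rw [if_pos hx.2]
    rw [Finset.prod_congr rfl hlow, Finset.prod_congr rfl hhigh]
    rw [Finset.prod_const]
    have hlowcard : (Finset.univ.filter (fun x : Fin m => ¬ t ≤ x.castSucc)).card = (t : ℕ) := by
      rw [← card_lows t]
      congr 1
      apply Finset.filter_congr
      intro x _
      simp [not_le]
    rw [hlowcard]
    -- the high part
    rw [← Finset.prod_filter_mul_prod_filter_not
      (Finset.univ.filter (fun x : Fin m => t ≤ x.castSucc)) (fun x => x ∈ T)]
    have hfT : (Finset.univ.filter (fun x : Fin m => t ≤ x.castSucc)).filter (fun x => x ∈ T)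
        = T := by
      ext x
      simp only [Finset.mem_filter, Finset.mem_univ, true_and]
      constructor
      · rintro ⟨_, h2⟩
        exact h2
      · intro hx
        exact ⟨by simpa [highsF] using hT hx, hx⟩
    have h1 : ∀ x ∈ (Finset.univ.filter (fun x : Fin m => t ≤ x.castSucc)).filter
        (fun x => x ∈ T), (if x ∈ T then 1 else r - 2) = 1 := by
      intro x hx
      rw [if_pos (Finset.mem_filter.1 hx).2]
    have h2 : ∀ x ∈ (Finset.univ.filter (fun x : Fin m => t ≤ x.castSucc)).filter
        (fun x => ¬ x ∈ T), (if x ∈ T then 1 else r - 2) = r - 2 := by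
      intro x hx
      rw [if_neg (Finset.mem_filter.1 hx).2]
    rw [Finset.prod_congr rfl h1, Finset.prod_congr rfl h2, Finset.prod_const_one,
      Finset.prod_const, one_mul]
    have hcard2 : ((Finset.univ.filter (fun x : Fin m => t ≤ x.castSucc)).filter
        (fun x => ¬ x ∈ T)).card = (m - (t:ℕ)) - T.card := by
      rw [← Finset.sdiff_eq_filter]
      rw [Finset.card_sdiff_of_subset (by simpa [highsF] using hT)]
      rw [card_highs]
    rw [hcard2]
    ring
  · rw [if_neg hT, Finset.card_eq_zero]
    rw [Finset.filter_eq_empty_iff]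
    intro d _
    intro hZ
    apply hT
    rw [← hZ]
    intro x hx
    simp only [ZsetD, Finset.mem_filter, Finset.mem_univ, true_and] at hx
    simp only [highsF, Finset.mem_filter, Finset.mem_univ, true_and]
    exact hx.1

lemma card_case2 (hr : 2 ≤ r) (t : Fin (m+1)) :
    Nat.card {x : SignedPerm (m+1) r // x.1 t = Fin.last m ∧
        (AvoidCond x ∧ ((x.2 t : ℕ) = 0))}
      = (r-1)^(t:ℕ) * ∑ s ∈ Finset.range ((m - (t:ℕ)) + 1),
          (m - (t:ℕ)).choose s * ((r-2)^((m - (t:ℕ)) - s) * m.descFactorial (m - s)) := by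
  classical
  rw [card_slice]
  have h : ∀ sy : Fin r × SignedPerm m r,
      (AvoidCond (insSP t sy.1 sy.2) ∧ ((insSP t sy.1 sy.2).2 t : ℕ) = 0)
        ↔ (((sy.1 : ℕ) = 0) ∧ (P2 t sy.2.2 ∧
            (∀ a ∈ ZsetD t sy.2.2, ∀ b ∈ ZsetD t sy.2.2, a < b → sy.2.1 b < sy.2.1 a))) := by
    rintro ⟨s, τ, d⟩
    rw [insSP_snd_self]
    constructor
    · rintro ⟨hA, hs⟩
      obtain ⟨D1, D2, hanti⟩ := (avoidCond_insSP_zero_iff t s hs (τ, d)).1 hA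
      refine ⟨hs, ⟨D1, D2⟩, ?_⟩
      intro a ha b hb hab
      simp only [ZsetD, Finset.mem_filter, Finset.mem_univ, true_and] at ha hb
      exact hanti a b hab ha.1 ha.2 hb.2
    · rintro ⟨hs, ⟨D1, D2⟩, hanti⟩
      refine ⟨(avoidCond_insSP_zero_iff t s hs (τ, d)).2 ⟨D1, D2, ?_⟩, hs⟩
      intro a b hab hta h0a h0b
      have htb : t ≤ b.castSucc :=
        le_trans hta (by simpa [Fin.castSucc_le_castSucc_iff] using hab.le)
      refine hanti a ?_ b ?_ hab
      · simp only [ZsetD, Finset.mem_filter, Finset.mem_univ, true_and]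
        exact ⟨hta, h0a⟩
      · simp only [ZsetD, Finset.mem_filter, Finset.mem_univ, true_and]
        exact ⟨htb, h0b⟩
  rw [Nat.card_congr ((Equiv.subtypeEquivRight h).trans
    (Equiv.subtypeProdEquivProd (p := fun s : Fin r => (s : ℕ) = 0)
      (q := fun y : SignedPerm m r => P2 t y.2 ∧
        ∀ a ∈ ZsetD t y.2, ∀ b ∈ ZsetD t y.2, a < b → y.1 b < y.1 a)))]
  rw [Nat.card_prod, card_signs_eq_zero (by omega), one_mul]
  have e3 : {y : SignedPerm m r // P2 t y.2 ∧
        ∀ a ∈ ZsetD t y.2, ∀ b ∈ ZsetD t y.2, a < b → y.1 b < y.1 a}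
      ≃ Σ bd : {d : Fin m → Fin r // P2 t d}, {τ : Equiv.Perm (Fin m) //
          ∀ a ∈ ZsetD t bd.1, ∀ b ∈ ZsetD t bd.1, a < b → τ b < τ a} :=
    prodSubtypeSigmaEquiv (fun d => P2 t d)
      (fun (τ : Equiv.Perm (Fin m)) (d : Fin m → Fin r) =>
        ∀ a ∈ ZsetD t d, ∀ b ∈ ZsetD t d, a < b → τ b < τ a)
  rw [Nat.card_congr e3]
  rw [Nat.card_eq_fintype_card, Fintype.card_sigma]
  have hpt : ∀ bd : {d : Fin m → Fin r // P2 t d},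
      Fintype.card {τ : Equiv.Perm (Fin m) //
          ∀ a ∈ ZsetD t bd.1, ∀ b ∈ ZsetD t bd.1, a < b → τ b < τ a}
        = m.descFactorial (m - (ZsetD t bd.1).card) := by
    intro bd
    rw [← Nat.card_eq_fintype_card]
    exact card_perm_antiOn (ZsetD t bd.1)
  rw [Finset.sum_congr rfl (fun bd _ => hpt bd)]
  rw [← Finset.sum_subtype (Finset.univ.filter (fun d : Fin m → Fin r => P2 t d))
    (fun d => by simp) (fun d => m.descFactorial (m - (ZsetD t d).card))]
  rw [← Finset.sum_fiberwise (Finset.univ.filter (fun d : Fin m → Fin r => P2 t d))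
    (fun d => ZsetD t d) (fun d => m.descFactorial (m - (ZsetD t d).card))]
  have hfib : ∀ T : Finset (Fin m),
      ∑ d ∈ (Finset.univ.filter (fun d : Fin m → Fin r => P2 t d)).filter
          (fun d => ZsetD t d = T), m.descFactorial (m - (ZsetD t d).card)
        = if T ⊆ highsF t then (r-1)^(t:ℕ) * (r-2)^((m-(t:ℕ)) - T.card)
            * m.descFactorial (m - T.card) else 0 := by
    intro T
    rw [Finset.sum_congr rfl (fun d hd => by rw [(Finset.mem_filter.1 hd).2])]
    rw [Finset.sum_const, card_colorings hr t T, smul_eq_mul, ite_mul, zero_mul, mul_assoc]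
  rw [Finset.sum_congr rfl (fun T _ => hfib T)]
  rw [← Finset.sum_filter]
  have hpow : Finset.univ.filter (fun T : Finset (Fin m) => T ⊆ highsF t)
      = (highsF t).powerset := by
    ext T
    simp [Finset.mem_powerset]
  rw [hpow, Finset.sum_powerset]
  have hinner : ∀ j ∈ Finset.range ((highsF t).card + 1),
      ∑ T ∈ Finset.powersetCard j (highsF t),
          (r-1)^(t:ℕ) * (r-2)^((m-(t:ℕ)) - T.card) * m.descFactorial (m - T.card)
        = (m - (t:ℕ)).choose j *
            ((r-1)^(t:ℕ) * (r-2)^((m-(t:ℕ)) - j) * m.descFactorial (m - j)) := by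
    intro j _
    rw [Finset.sum_congr rfl (fun T hT => by
      rw [(Finset.mem_powersetCard.1 hT).2])]
    rw [Finset.sum_const, Finset.card_powersetCard, smul_eq_mul,
      show (highsF t).card = m - (t:ℕ) from card_highs t]
  rw [Finset.sum_congr rfl hinner]
  have hc : (highsF t).card = m - (t : ℕ) := card_highs t
  rw [hc, Finset.mul_sum]
  apply Finset.sum_congr rfl
  intro j _
  ring

lemma card_avoid_succ :
    Nat.card {x : SignedPerm (m+1) r // AvoidCond x}
      = ∑ t : Fin (m+1),
          Nat.card {x : SignedPerm (m+1) r // AvoidCond x ∧ x.1 t = Fin.last m} := by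
  classical
  have e := Equiv.sigmaFiberEquiv
    (fun x : {x : SignedPerm (m+1) r // AvoidCond x} => x.1.1.symm (Fin.last m))
  rw [← Nat.card_congr e, Nat.card_eq_fintype_card, Fintype.card_sigma]
  apply Finset.sum_congr rfl
  intro t _
  rw [← Nat.card_eq_fintype_card]
  apply Nat.card_congr
  exact (Equiv.subtypeSubtypeEquivSubtypeInter
      (fun x : SignedPerm (m+1) r => AvoidCond x)
      (fun x => x.1.symm (Fin.last m) = t)).trans
    (Equiv.subtypeEquivRight (fun x =>
      and_congr_right (fun _ => ((x.1.symm_apply_eq).trans eq_comm))))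

lemma card_fiber (hr : 2 ≤ r) (t : Fin (m+1)) :
    Nat.card {x : SignedPerm (m+1) r // AvoidCond x ∧ x.1 t = Fin.last m}
      = (r - 1) * Nat.card {y : SignedPerm m r // AvoidCond y}
        + (r-1)^(t:ℕ) * ∑ s ∈ Finset.range ((m - (t:ℕ)) + 1),
            (m - (t:ℕ)).choose s * ((r-2)^((m - (t:ℕ)) - s) * m.descFactorial (m - s)) := by
  classical
  rw [Nat.card_congr (Equiv.subtypeEquivRight
    (fun x : SignedPerm (m+1) r => and_comm
      (a := AvoidCond x) (b := x.1 t = Fin.last m)))]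
  rw [nat_card_split (fun x : SignedPerm (m+1) r => x.1 t = Fin.last m ∧ AvoidCond x)
    (fun x => (x.2 t : ℕ) ≠ 0)]
  have e1 : ∀ x : SignedPerm (m+1) r,
      ((x.1 t = Fin.last m ∧ AvoidCond x) ∧ (x.2 t : ℕ) ≠ 0)
        ↔ (x.1 t = Fin.last m ∧ (AvoidCond x ∧ (x.2 t : ℕ) ≠ 0)) := by
    intro x
    tauto
  have e2 : ∀ x : SignedPerm (m+1) r,
      ((x.1 t = Fin.last m ∧ AvoidCond x) ∧ ¬ (x.2 t : ℕ) ≠ 0)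
        ↔ (x.1 t = Fin.last m ∧ (AvoidCond x ∧ (x.2 t : ℕ) = 0)) := by
    intro x
    constructor
    · rintro ⟨⟨h1, h2⟩, h3⟩
      exact ⟨h1, h2, not_not.1 h3⟩
    · rintro ⟨h1, h2, h3⟩
      exact ⟨⟨h1, h2⟩, not_not.2 h3⟩
  rw [Nat.card_congr (Equiv.subtypeEquivRight e1),
    Nat.card_congr (Equiv.subtypeEquivRight e2),
    card_case1 (by omega) t, card_case2 hr t]

end Infra

/-- with `p_n = |E_n^r((1^(1),2^(1)), (2^(1),1^(2)))|` and
`d_{r-1}(m) = Σ_j j!(r-2)^j C(m,j)^2`, the recurrence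
`p_n = n(r-1)p_{n-1} + Σ_{i=1}^n C(n-1,i-1)(n-i)!(r-1)^{n-i} d_{r-1}(i-1)`
holds for `n ≥ 1`, with `p_0 = 1`. -/
theorem recurrence_case4 (r : ℕ) (hr : 2 ≤ r) (p : ℕ → ℕ)
    (hp : ∀ n, p n = Nat.card {x : SignedPerm n r //
        ¬ SPContains ((1 : Equiv.Perm (Fin 2)),
            ![(⟨0, by omega⟩ : Fin r), ⟨0, by omega⟩]) x ∧
        ¬ SPContains (Equiv.swap 0 1,
            ![(⟨0, by omega⟩ : Fin r), ⟨1, hr⟩]) x}) :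
    p 0 = 1 ∧ ∀ n, 1 ≤ n →
      p n = n * (r - 1) * p (n - 1) +
        ∑ i ∈ Finset.Icc 1 n,
          (n - 1).choose (i - 1) * (n - i).factorial * (r - 1) ^ (n - i) *
            (∑ j ∈ Finset.range ((i - 1) + 1),
              j.factorial * (r - 2) ^ j * ((i - 1).choose j) ^ 2) := by
  constructor
  · rw [hp 0]
    have hall : ∀ x : SignedPerm 0 r,
        (¬ SPContains ((1 : Equiv.Perm (Fin 2)),
            ![(⟨0, by omega⟩ : Fin r), ⟨0, by omega⟩]) x ∧
         ¬ SPContains (Equiv.swap 0 1,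
            ![(⟨0, by omega⟩ : Fin r), ⟨1, hr⟩]) x) := by
      intro x
      constructor
      · rintro ⟨f, -, -, -⟩
        exact (f 0).elim0
      · rintro ⟨f, -, -, -⟩
        exact (f 0).elim0
    rw [Nat.card_congr (Equiv.subtypeUnivEquiv hall), Nat.card_eq_fintype_card]
    simp
  · intro n hn
    obtain ⟨m, rfl⟩ : ∃ m, n = m + 1 := ⟨n - 1, by omega⟩
    have hpm : Nat.card {y : SignedPerm m r // AvoidCond y} = p m := by
      rw [hp m]
      exact (Nat.card_congr (Equiv.subtypeEquivRight (fun x => avoid_iff hr x))).symm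
    rw [hp (m+1), Nat.card_congr (Equiv.subtypeEquivRight (fun x => avoid_iff hr x))]
    rw [card_avoid_succ]
    rw [Finset.sum_congr rfl (fun t _ => card_fiber hr t)]
    rw [Finset.sum_add_distrib, Finset.sum_const, Finset.card_univ, Fintype.card_fin,
      smul_eq_mul, hpm]
    congr 1
    · rw [show m + 1 - 1 = m from rfl, mul_assoc]
    · rw [Fin.sum_univ_eq_sum_range (fun a => (r-1)^a * ∑ s ∈ Finset.range ((m-a)+1),
        (m-a).choose s * ((r-2)^((m-a)-s) * m.descFactorial (m - s))) (m+1)]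
      have hfs := final_sum r m
      rw [hfs]
      apply Finset.sum_congr rfl
      intro i _
      rw [show m + 1 - 1 = m from rfl]
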